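/- Let x ∈ ℝ^n, k ∈ ℕ, and let n = n_1 + ⋯ + n_k be an integer partition with each n_i ≥ 1; set c_0 = 0 and c_i = n_1 + ⋯ + n_i. Then for every 1 ≤ i ≤ k and every index r with c_{i-1} ≤ r < c_i, the r-th entry of Q_n x equals the (r − c_{i-1})-th entry of Q_{n_i} (B_{c_i, c_{i-1}} x^{(i)}), where x^{(i)} ∈ ℝ^{c_i} is the vector of the first c_i entries of x (for i = 1, B_{c_1, 0} is interpreted as the identity I_{n_1}). -/

import Mathlib

/-- The `ℓ∞`-normalized lower-triangular Pascal matrix: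
`(Q_n)_{ij} = 2^{-i} C(i, j)` for `j ≤ i`, else `0`. -/
noncomputable def Qmat (n : ℕ) : Matrix (Fin n) (Fin n) ℝ :=
  Matrix.of fun i j =>
    if (j : ℕ) ≤ (i : ℕ) then ((2 : ℝ) ^ (i : ℕ))⁻¹ * ((i : ℕ).choose (j : ℕ) : ℝ) else 0

/-- Entry `(i, j)` of the banded binomial convolution matrix `B_{·,m}`:
`(B)_{ij} = (b_m)_{j-i} = 2^{-m} C(m, j-i)` if `0 ≤ j - i ≤ m`, else `0`. -/
noncomputable def Bent (m i j : ℕ) : ℝ :=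
  if i ≤ j ∧ j ≤ i + m then ((2 : ℝ) ^ m)⁻¹ * (m.choose (j - i) : ℝ) else 0

/-- The banded binomial convolution matrix `B_{s,m}`, realized with `rows` rows (so that
`B_{s,m} = Bmat (s - m) m s`; for `m = 0` it is the identity `I_s`). -/
noncomputable def Bmat (rows m s : ℕ) : Matrix (Fin rows) (Fin s) ℝ :=
  Matrix.of fun i j => Bent m (i : ℕ) (j : ℕ)

/-- `c_i = n_1 + ⋯ + n_i`, the partial sums of the partition `nf 1, nf 2, …`. -/
def csum (nf : ℕ → ℕ) (i : ℕ) : ℕ := ∑ j ∈ Finset.range i, nf (j + 1)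

/-- Block recursion for the product `Q_n x`: for `c_{i-1} ≤ r < c_i`, entry `r` of `Q_n x`
equals entry `r - c_{i-1}` of `Q_{n_i} (B_{c_i, c_{i-1}} x^{(i)})`, where `x^{(i)}` consists
of the first `c_i` entries of `x`. -/
lemma choose_if_sum (t c j : ℕ) :
    ∑ a ∈ Finset.range (t+1),
      (t.choose a : ℝ) * (if a ≤ j ∧ j ≤ a + c then (c.choose (j-a) : ℝ) else 0)
    = if j ≤ t + c then ((t+c).choose j : ℝ) else 0 := by
  by_cases hj : j ≤ t + c
  · rw [if_pos hj, Nat.add_choose_eq, Finset.Nat.sum_antidiagonal_eq_sum_range_succ_mk]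
    have h1 : ∑ a ∈ Finset.range (t+1),
        (t.choose a : ℝ) * (if a ≤ j ∧ j ≤ a + c then (c.choose (j-a) : ℝ) else 0)
        = ∑ a ∈ Finset.range (t+1),
        (t.choose a : ℝ) * (if a ≤ j then (c.choose (j-a) : ℝ) else 0) := by
      apply Finset.sum_congr rfl
      intro a _
      by_cases h : a ≤ j
      · by_cases h2 : j ≤ a + c
        · rw [if_pos ⟨h, h2⟩, if_pos h]
        · rw [if_neg (by tauto), if_pos h, Nat.choose_eq_zero_of_lt (show c < j - a by omega)]
          simp
      · rw [if_neg (by tauto), if_neg h]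
    rw [h1]
    have h2 : ∑ a ∈ Finset.range (t+1),
        (t.choose a : ℝ) * (if a ≤ j then (c.choose (j-a) : ℝ) else 0)
        = ∑ a ∈ Finset.range (t+j+1),
        (t.choose a : ℝ) * (if a ≤ j then (c.choose (j-a) : ℝ) else 0) := by
      apply Finset.sum_subset
      · apply Finset.range_subset_range.mpr; omega
      · intro a _ ha
        simp only [Finset.mem_range, not_lt] at ha
        rw [Nat.choose_eq_zero_of_lt (by omega)]
        simp
    have h3 : ∑ a ∈ Finset.range (j+1),
        (t.choose a : ℝ) * (if a ≤ j then (c.choose (j-a) : ℝ) else 0)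
        = ∑ a ∈ Finset.range (t+j+1),
        (t.choose a : ℝ) * (if a ≤ j then (c.choose (j-a) : ℝ) else 0) := by
      apply Finset.sum_subset
      · apply Finset.range_subset_range.mpr; omega
      · intro a _ ha
        simp only [Finset.mem_range, not_lt] at ha
        rw [if_neg (by omega)]
        simp
    rw [h2, ← h3]
    push_cast
    apply Finset.sum_congr rfl
    intro a ha
    simp only [Finset.mem_range] at ha
    rw [if_pos (by omega)]
  · rw [if_neg hj]
    apply Finset.sum_eq_zero
    intro a ha
    simp only [Finset.mem_range] at ha
    rw [if_neg (by omega)]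
    simp

lemma main_calc (t c p s : ℕ) (ht : t < p) (hs : t + c < s) (x' : ℕ → ℝ) :
    ∑ a ∈ Finset.range p, (if a ≤ t then ((2:ℝ)^t)⁻¹ * (t.choose a : ℝ) else 0) *
        (∑ j ∈ Finset.range s, Bent c a j * x' j)
    = ∑ j ∈ Finset.range s,
        (if j ≤ t + c then ((2:ℝ)^(t+c))⁻¹ * ((t+c).choose j : ℝ) else 0) * x' j := by
  have hshrink : ∑ a ∈ Finset.range p, (if a ≤ t then ((2:ℝ)^t)⁻¹ * (t.choose a : ℝ) else 0) *
        (∑ j ∈ Finset.range s, Bent c a j * x' j)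
      = ∑ a ∈ Finset.range (t+1), (if a ≤ t then ((2:ℝ)^t)⁻¹ * (t.choose a : ℝ) else 0) *
        (∑ j ∈ Finset.range s, Bent c a j * x' j) := by
    symm
    apply Finset.sum_subset
    · apply Finset.range_subset_range.mpr; omega
    · intro a _ ha
      simp only [Finset.mem_range, not_lt] at ha
      rw [if_neg (by omega), zero_mul]
  rw [hshrink]
  simp only [Finset.mul_sum]
  rw [Finset.sum_comm]
  apply Finset.sum_congr rfl
  intro j _
  have key := choose_if_sum t c j
  have : ∑ a ∈ Finset.range (t+1),
      (if a ≤ t then ((2:ℝ)^t)⁻¹ * (t.choose a : ℝ) else 0) * (Bent c a j * x' j)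
      = (((2:ℝ)^t)⁻¹ * ((2:ℝ)^c)⁻¹ *
        ∑ a ∈ Finset.range (t+1),
          (t.choose a : ℝ) * (if a ≤ j ∧ j ≤ a + c then (c.choose (j-a) : ℝ) else 0)) * x' j := by
    rw [Finset.mul_sum, Finset.sum_mul]
    apply Finset.sum_congr rfl
    intro a ha
    simp only [Finset.mem_range] at ha
    rw [if_pos (by omega)]
    unfold Bent
    split_ifs <;> ring
  rw [this, key]
  rw [← mul_inv, ← pow_add]
  split_ifs <;> ring

theorem main_theorem_block_recursion (n k : ℕ) (nf : ℕ → ℕ)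
    (hpos : ∀ i, 1 ≤ i → i ≤ k → 1 ≤ nf i) (hsum : csum nf k = n)
    (x : Fin n → ℝ) (i : ℕ) (hi1 : 1 ≤ i) (hik : i ≤ k)
    (r : Fin n) (hr1 : csum nf (i - 1) ≤ (r : ℕ)) (hr2 : (r : ℕ) < csum nf i) :
    (Qmat n).mulVec x r =
      (Qmat (nf i)).mulVec
        ((Bmat (nf i) (csum nf (i - 1)) (csum nf i)).mulVec
          (fun j : Fin (csum nf i) =>
            x (Fin.castLE
              (by
                have h1 : csum nf i ≤ csum nf k :=
                  Finset.sum_le_sum_of_subset (Finset.range_subset_range.mpr hik)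
                omega) j)))
        ⟨(r : ℕ) - csum nf (i - 1), by
          have h2 : csum nf ((i - 1) + 1) = csum nf (i - 1) + nf ((i - 1) + 1) :=
            Finset.sum_range_succ (fun j => nf (j + 1)) (i - 1)
          have h3 : i - 1 + 1 = i := by omega
          rw [h3] at h2
          omega⟩ := by
  set c := csum nf (i - 1) with hc
  set p := nf i with hp
  set s := csum nf i with hsdef
  have hsn : s ≤ n := by
    have h1 : csum nf i ≤ csum nf k :=
      Finset.sum_le_sum_of_subset (Finset.range_subset_range.mpr hik)
    omega
  have hsplit : s = c + p := by
    have h2 : csum nf ((i - 1) + 1) = csum nf (i - 1) + nf ((i - 1) + 1) :=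
      Finset.sum_range_succ (fun j => nf (j + 1)) (i - 1)
    have h3 : i - 1 + 1 = i := by omega
    rw [h3] at h2
    omega
  set t := (r : ℕ) - c with htdef
  have hrt : (r : ℕ) = t + c := by omega
  have ht : t < p := by omega
  have hts : t + c < s := by omega
  set x' : ℕ → ℝ := fun j => if h : j < n then x ⟨j, h⟩ else 0 with hx'
  -- LHS
  have hL : (Qmat n).mulVec x r
      = ∑ j ∈ Finset.range n,
          (if j ≤ t + c then ((2:ℝ)^(t+c))⁻¹ * ((t+c).choose j : ℝ) else 0) * x' j := by
    rw [Matrix.mulVec, dotProduct, ← Fin.sum_univ_eq_sum_range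
      (fun j => (if j ≤ t + c then ((2:ℝ)^(t+c))⁻¹ * ((t+c).choose j : ℝ) else 0) * x' j) n]
    apply Finset.sum_congr rfl
    intro j _
    simp only [Qmat, Matrix.of_apply, hx', j.isLt, dif_pos, ← hrt]
  have hL2 : (Qmat n).mulVec x r
      = ∑ j ∈ Finset.range s,
          (if j ≤ t + c then ((2:ℝ)^(t+c))⁻¹ * ((t+c).choose j : ℝ) else 0) * x' j := by
    rw [hL]
    symm
    apply Finset.sum_subset (Finset.range_subset_range.mpr hsn)
    intro j _ hj
    simp only [Finset.mem_range, not_lt] at hj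
    rw [if_neg (by omega), zero_mul]
  -- RHS
  have hR : (Qmat p).mulVec
        ((Bmat p c s).mulVec
          (fun j : Fin s =>
            x (Fin.castLE (by omega) j)))
        ⟨t, by omega⟩
      = ∑ a ∈ Finset.range p, (if a ≤ t then ((2:ℝ)^t)⁻¹ * (t.choose a : ℝ) else 0) *
          (∑ j ∈ Finset.range s, Bent c a j * x' j) := by
    rw [Matrix.mulVec, dotProduct, ← Fin.sum_univ_eq_sum_range
      (fun a => (if a ≤ t then ((2:ℝ)^t)⁻¹ * (t.choose a : ℝ) else 0) *
          (∑ j ∈ Finset.range s, Bent c a j * x' j)) p]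
    apply Finset.sum_congr rfl
    intro a _
    congr 1
    rw [Matrix.mulVec, dotProduct, ← Fin.sum_univ_eq_sum_range
      (fun j => Bent c (a : ℕ) j * x' j) s]
    apply Finset.sum_congr rfl
    intro j _
    simp only [Bmat, Matrix.of_apply, hx']
    congr 1
    have hj : (j : ℕ) < n := by omega
    rw [dif_pos hj]
    rfl
  rw [hL2]
  rw [show ((⟨(r : ℕ) - csum nf (i-1), by omega⟩ : Fin (nf i)) = (⟨t, by omega⟩ : Fin p)) from rfl]
  rw [hR, main_calc t c p s ht hts x']
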